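/- Assume Δ is upper triangular. Then the real linear span 𝔤 of { A, X, Y₁, …, Y_{2n} } inside the (2n+2)×(2n+2) complex matrices is closed under the commutator bracket (i.e., it is a real Lie subalgebra of gl(2n+2, ℂ)), and 𝔤 is a solvable Lie algebra. -/

import Mathlib

/-!
Statement 4: for upper-triangular `Δ`, the real span `𝔤` of the generators
`A, X, Y₁, …, Y_{2n}` inside the `(2n+2) × (2n+2)` complex matrices is closed under
the commutator bracket, and `𝔤` is a solvable real Lie algebra.
-/

open Matrix

attribute [local instance 100] LieRing.ofAssociativeRing

/-- The index type for the `(2n+2) × (2n+2)` block matrices, with blocks of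
sizes `1, n, n, 1`. -/
abbrev EPIdx (n : ℕ) := (Unit ⊕ Fin n) ⊕ (Fin n ⊕ Unit)

/-- `A = blockdiag(c, Δ, conj Δ, 0)`, diagonal blocks of sizes `1, n, n, 1`. -/
noncomputable def Agen (n : ℕ) (c : ℝ) (Δ : Matrix (Fin n) (Fin n) ℂ) :
    Matrix (EPIdx n) (EPIdx n) ℂ :=
  Matrix.fromBlocks
    (Matrix.fromBlocks (Matrix.of fun _ _ => (c : ℂ)) 0 0 Δ) 0 0
    (Matrix.fromBlocks (Δ.map (starRingEnd ℂ)) 0 0 0)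

/-- `X`: only nonzero entry is `1` in position `(1, 2n+2)`. -/
noncomputable def Xgen (n : ℕ) : Matrix (EPIdx n) (EPIdx n) ℂ :=
  Matrix.fromBlocks 0 (Matrix.fromBlocks 0 (Matrix.of fun _ _ => (1 : ℂ)) 0 0) 0 0

/-- `Y_j` (for `1 ≤ j ≤ n`): only nonzero entries are `1` in positions
`(1+j, 2n+2)` and `(n+1+j, 2n+2)`. -/
noncomputable def Ygen (n : ℕ) (j : Fin n) : Matrix (EPIdx n) (EPIdx n) ℂ :=
  Matrix.fromBlocks 0
    (Matrix.fromBlocks 0 0 0 (Matrix.replicateCol Unit (Pi.single j (1 : ℂ)))) 0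
    (Matrix.fromBlocks 0 (Matrix.replicateCol Unit (Pi.single j (1 : ℂ))) 0 0)

/-- `Y_{n+j}` (for `1 ≤ j ≤ n`): only nonzero entries are `i` in position
`(1+j, 2n+2)` and `−i` in position `(n+1+j, 2n+2)`. -/
noncomputable def Ygen' (n : ℕ) (j : Fin n) : Matrix (EPIdx n) (EPIdx n) ℂ :=
  Matrix.fromBlocks 0
    (Matrix.fromBlocks 0 0 0 (Matrix.replicateCol Unit (Pi.single j Complex.I))) 0
    (Matrix.fromBlocks 0 (Matrix.replicateCol Unit (Pi.single j (-Complex.I))) 0 0)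

/-- The set of generators `{A, X, Y₁, …, Y_{2n}}`. -/
noncomputable def EPgens (n : ℕ) (c : ℝ) (Δ : Matrix (Fin n) (Fin n) ℂ) :
    Set (Matrix (EPIdx n) (EPIdx n) ℂ) :=
  {Agen n c Δ, Xgen n} ∪ Set.range (Ygen n) ∪ Set.range (Ygen' n)

/-! ### Auxiliary definitions and lemmas -/

/-- A general "Y-type" element: top entries `v`, bottom entries `conj v`. -/
noncomputable def Yg (n : ℕ) (v : Fin n → ℂ) : Matrix (EPIdx n) (EPIdx n) ℂ :=
  Matrix.fromBlocks 0
    (Matrix.fromBlocks 0 0 0 (Matrix.replicateCol Unit v)) 0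
    (Matrix.fromBlocks 0 (Matrix.replicateCol Unit fun k => (starRingEnd ℂ) (v k)) 0 0)

/-- The submodule spanned by `X` and the `Y`'s. -/
noncomputable def Wsub (n : ℕ) : Submodule ℝ (Matrix (EPIdx n) (EPIdx n) ℂ) :=
  Submodule.span ℝ (({Xgen n} ∪ Set.range (Ygen n)) ∪ Set.range (Ygen' n))

/-- Matrices supported in the last column, with vanishing last row. -/
def Vprop {n : ℕ} (M : Matrix (EPIdx n) (EPIdx n) ℂ) : Prop :=
  (∀ i j, j ≠ Sum.inr (Sum.inr ()) → M i j = 0) ∧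
    (∀ j, M (Sum.inr (Sum.inr ())) j = 0)

section Aux

variable {n : ℕ} {c : ℝ} {Δ : Matrix (Fin n) (Fin n) ℂ}

lemma A_mul_X : Agen n c Δ * Xgen n = c • Xgen n := by
  simp only [Agen, Xgen, Matrix.fromBlocks_multiply]
  ext i j
  rcases i with (i | i) | (i | i) <;> rcases j with (j | j) | (j | j) <;>
    simp [Matrix.mul_apply, Complex.real_smul]

lemma X_mul_A : Xgen n * Agen n c Δ = 0 := by
  simp [Agen, Xgen, Matrix.fromBlocks_multiply]

lemma A_mul_Yg (v : Fin n → ℂ) : Agen n c Δ * Yg n v = Yg n (Δ *ᵥ v) := by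
  simp only [Agen, Yg, Matrix.fromBlocks_multiply]
  simp [Matrix.fromBlocks_multiply]
  constructor
  · ext i j
    simp [Matrix.mul_apply, Matrix.mulVec, dotProduct]
  · ext i j
    simp [Matrix.mul_apply, Matrix.mulVec, dotProduct, map_sum]

lemma Yg_mul_A (v : Fin n → ℂ) : Yg n v * Agen n c Δ = 0 := by
  simp [Agen, Yg, Matrix.fromBlocks_multiply]

lemma Yg_eq_sum (v : Fin n → ℂ) :
    Yg n v = ∑ j, ((v j).re • Ygen n j + (v j).im • Ygen' n j) := by
  ext i k
  rcases i with (i | i) | (i | i) <;> rcases k with (k | k) | (k | k) <;>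
    simp [Yg, Ygen, Ygen', Matrix.sum_apply, Pi.single_apply, Complex.real_smul,
      mul_ite, Finset.sum_ite_eq', apply_ite (starRingEnd ℂ), Finset.sum_add_distrib,
      Finset.sum_ite_eq, Complex.ext_iff]

lemma Yg_mem (v : Fin n → ℂ) : Yg n v ∈ Wsub n := by
  rw [Yg_eq_sum]
  refine Submodule.sum_mem _ fun j _ => add_mem ?_ ?_
  · exact Submodule.smul_mem _ _ (Submodule.subset_span (Or.inl (Or.inr ⟨j, rfl⟩)))
  · exact Submodule.smul_mem _ _ (Submodule.subset_span (Or.inr ⟨j, rfl⟩))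

lemma Yg_single_one (j : Fin n) : Yg n (Pi.single j (1 : ℂ)) = Ygen n j := by
  ext i k
  rcases i with (i | i) | (i | i) <;> rcases k with (k | k) | (k | k) <;>
    simp [Yg, Ygen, Pi.single_apply, apply_ite (starRingEnd ℂ)]

lemma Yg_single_I (j : Fin n) : Yg n (Pi.single j Complex.I) = Ygen' n j := by
  ext i k
  rcases i with (i | i) | (i | i) <;> rcases k with (k | k) | (k | k) <;>
    simp [Yg, Ygen', Pi.single_apply, apply_ite (starRingEnd ℂ)]

lemma Vprop_X : Vprop (Xgen n) := by
  refine ⟨fun i j hj => ?_, fun j => ?_⟩ <;>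
    [skip; rcases j with (j | j) | (j | j) <;> simp [Xgen]]
  rcases i with (i | i) | (i | i) <;> rcases j with (j | j) | (j | j) <;> simp [Xgen] <;>
    simp at hj

lemma Vprop_Yg (v : Fin n → ℂ) : Vprop (Yg n v) := by
  refine ⟨fun i j hj => ?_, fun j => ?_⟩ <;>
    [skip; rcases j with (j | j) | (j | j) <;> simp [Yg]]
  rcases i with (i | i) | (i | i) <;> rcases j with (j | j) | (j | j) <;> simp [Yg] <;>
    simp at hj

lemma Vprop.zero : Vprop (0 : Matrix (EPIdx n) (EPIdx n) ℂ) := by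
  constructor <;> intros <;> simp

lemma Vprop.add {M N : Matrix (EPIdx n) (EPIdx n) ℂ} (hM : Vprop M) (hN : Vprop N) :
    Vprop (M + N) := by
  constructor
  · intro i j hj; simp [hM.1 i j hj, hN.1 i j hj]
  · intro j; simp [hM.2 j, hN.2 j]

lemma Vprop.smul {M : Matrix (EPIdx n) (EPIdx n) ℂ} (r : ℝ) (hM : Vprop M) :
    Vprop (r • M) := by
  constructor
  · intro i j hj; simp [hM.1 i j hj]
  · intro j; simp [hM.2 j]

lemma Vprop_of_mem_W {M : Matrix (EPIdx n) (EPIdx n) ℂ} (hM : M ∈ Wsub n) : Vprop M := by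
  induction hM using Submodule.span_induction with
  | mem x hx =>
    rcases hx with (hx | ⟨j, rfl⟩) | ⟨j, rfl⟩
    · rcases hx with rfl
      exact Vprop_X
    · rw [← Yg_single_one]; exact Vprop_Yg _
    · rw [← Yg_single_I]; exact Vprop_Yg _
  | zero => exact Vprop.zero
  | add x y _ _ hx hy => exact hx.add hy
  | smul r x _ hx => exact hx.smul r

lemma Vprop.mul_eq_zero {M N : Matrix (EPIdx n) (EPIdx n) ℂ} (hM : Vprop M) (hN : Vprop N) :
    M * N = 0 := by
  ext i j
  rw [Matrix.mul_apply]
  refine Finset.sum_eq_zero fun k _ => ?_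
  by_cases hk : k = Sum.inr (Sum.inr ())
  · subst hk; rw [hN.2 j, mul_zero]
  · rw [hM.1 i k hk, zero_mul]

lemma bracket_A_W {M : Matrix (EPIdx n) (EPIdx n) ℂ} (hM : M ∈ Wsub n) :
    Agen n c Δ * M - M * Agen n c Δ ∈ Wsub n := by
  induction hM using Submodule.span_induction with
  | mem x hx =>
    rcases hx with (hx | ⟨j, rfl⟩) | ⟨j, rfl⟩
    · rcases hx with rfl
      rw [A_mul_X, X_mul_A, sub_zero]
      exact Submodule.smul_mem _ _ (Submodule.subset_span (Or.inl (Or.inl rfl)))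
    · rw [← Yg_single_one, A_mul_Yg, Yg_mul_A, sub_zero]
      exact Yg_mem _
    · rw [← Yg_single_I, A_mul_Yg, Yg_mul_A, sub_zero]
      exact Yg_mem _
  | zero => simp
  | add x y _ _ hx hy =>
    have : Agen n c Δ * (x + y) - (x + y) * Agen n c Δ =
        (Agen n c Δ * x - x * Agen n c Δ) + (Agen n c Δ * y - y * Agen n c Δ) := by
      noncomm_ring
    rw [this]; exact add_mem hx hy
  | smul r x _ hx =>
    have : Agen n c Δ * (r • x) - (r • x) * Agen n c Δ =
        r • (Agen n c Δ * x - x * Agen n c Δ) := by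
      rw [mul_smul_comm, smul_mul_assoc, smul_sub]
    rw [this]; exact Submodule.smul_mem _ _ hx

lemma gens_eq :
    EPgens n c Δ = insert (Agen n c Δ) (({Xgen n} ∪ Set.range (Ygen n)) ∪ Set.range (Ygen' n)) := by
  simp only [EPgens, Set.insert_union, Set.union_assoc]

lemma span_gens_eq :
    Submodule.span ℝ (EPgens n c Δ) = (ℝ ∙ Agen n c Δ) ⊔ Wsub n := by
  rw [gens_eq, Submodule.span_insert]
  rfl

lemma W_le_span : Wsub n ≤ Submodule.span ℝ (EPgens n c Δ) := by
  rw [span_gens_eq]; exact le_sup_right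

lemma key_W {P Q : Matrix (EPIdx n) (EPIdx n) ℂ}
    (hP : P ∈ Submodule.span ℝ (EPgens n c Δ)) (hQ : Q ∈ Submodule.span ℝ (EPgens n c Δ)) :
    P * Q - Q * P ∈ Wsub n := by
  rw [span_gens_eq] at hP hQ
  obtain ⟨pa, hpa, p, hp, rfl⟩ := Submodule.mem_sup.mp hP
  obtain ⟨qa, hqa, q, hq, rfl⟩ := Submodule.mem_sup.mp hQ
  obtain ⟨r, rfl⟩ := Submodule.mem_span_singleton.mp hpa
  obtain ⟨s, rfl⟩ := Submodule.mem_span_singleton.mp hqa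
  have hpq : p * q = 0 := (Vprop_of_mem_W hp).mul_eq_zero (Vprop_of_mem_W hq)
  have hqp : q * p = 0 := (Vprop_of_mem_W hq).mul_eq_zero (Vprop_of_mem_W hp)
  have hexp : (r • Agen n c Δ + p) * (s • Agen n c Δ + q) -
      (s • Agen n c Δ + q) * (r • Agen n c Δ + p) =
      r • (Agen n c Δ * q - q * Agen n c Δ) + (-s) • (Agen n c Δ * p - p * Agen n c Δ) := by
    simp only [add_mul, mul_add, smul_mul_assoc, mul_smul_comm, smul_smul, hpq, hqp,
      smul_sub, neg_smul]
    module
  rw [hexp]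
  exact add_mem (Submodule.smul_mem _ _ (bracket_A_W hq)) (Submodule.smul_mem _ _ (bracket_A_W hp))

end Aux

theorem EP_span_lie_solvable (n : ℕ) (hn : 1 ≤ n) (c : ℝ)
    (Δ : Matrix (Fin n) (Fin n) ℂ) (hΔ : ∀ i j : Fin n, j < i → Δ i j = 0) :
    (∀ P ∈ Submodule.span ℝ (EPgens n c Δ), ∀ Q ∈ Submodule.span ℝ (EPgens n c Δ),
      P * Q - Q * P ∈ Submodule.span ℝ (EPgens n c Δ)) ∧
    ∃ L : LieSubalgebra ℝ (Matrix (EPIdx n) (EPIdx n) ℂ),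
      (L : Set (Matrix (EPIdx n) (EPIdx n) ℂ)) =
        (Submodule.span ℝ (EPgens n c Δ) : Set (Matrix (EPIdx n) (EPIdx n) ℂ)) ∧
      LieAlgebra.IsSolvable L := by
  have key : ∀ P ∈ Submodule.span ℝ (EPgens n c Δ), ∀ Q ∈ Submodule.span ℝ (EPgens n c Δ),
      P * Q - Q * P ∈ Submodule.span ℝ (EPgens n c Δ) :=
    fun P hP Q hQ => W_le_span (key_W hP hQ)
  refine ⟨key, ?_⟩
  set L : LieSubalgebra ℝ (Matrix (EPIdx n) (EPIdx n) ℂ) :=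
    { Submodule.span ℝ (EPgens n c Δ) with
      lie_mem' := fun {x y} hx hy => by
        rw [Ring.lie_def]; exact key x hx y hy } with hL
  refine ⟨L, rfl, ?_⟩
  -- the ideal of elements lying in `Wsub`
  set I : LieIdeal ℝ L :=
    { carrier := {x : L | (x : Matrix (EPIdx n) (EPIdx n) ℂ) ∈ Wsub n}
      add_mem' := fun hx hy => by simpa using add_mem hx hy
      zero_mem' := by simp
      smul_mem' := fun r x hx => by simpa using Submodule.smul_mem _ r hx
      lie_mem := fun {x m} hm => by
        show ((⁅x, m⁆ : L) : Matrix (EPIdx n) (EPIdx n) ℂ) ∈ Wsub n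
        rw [LieSubalgebra.coe_bracket, Ring.lie_def]
        exact key_W x.2 m.2 } with hI
  have hD1 : LieAlgebra.derivedSeries ℝ L 1 ≤ I := by
    rw [LieAlgebra.derivedSeries_def, LieAlgebra.derivedSeriesOfIdeal_succ,
      LieAlgebra.derivedSeriesOfIdeal_zero, LieSubmodule.lieIdeal_oper_eq_span]
    rw [LieSubmodule.lieSpan_le]
    rintro m ⟨x, y, rfl⟩
    show ((⁅(x : L), (y : L)⁆ : L) : Matrix (EPIdx n) (EPIdx n) ℂ) ∈ Wsub n
    rw [LieSubalgebra.coe_bracket, Ring.lie_def]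
    exact key_W (x : L).2 (y : L).2
  have hII : ⁅I, I⁆ = (⊥ : LieIdeal ℝ L) := by
    rw [LieSubmodule.lie_eq_bot_iff]
    intro x hx m hm
    apply Subtype.ext
    rw [LieSubalgebra.coe_bracket, Ring.lie_def]
    show (x : Matrix (EPIdx n) (EPIdx n) ℂ) * m - (m : Matrix (EPIdx n) (EPIdx n) ℂ) * x = 0
    rw [(Vprop_of_mem_W hx).mul_eq_zero (Vprop_of_mem_W hm),
      (Vprop_of_mem_W hm).mul_eq_zero (Vprop_of_mem_W hx), sub_zero]
  refine LieAlgebra.IsSolvable.mk (R := ℝ) (k := 2) (le_bot_iff.mp ?_)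
  have : LieAlgebra.derivedSeries ℝ L 2 = ⁅LieAlgebra.derivedSeries ℝ L 1,
      LieAlgebra.derivedSeries ℝ L 1⁆ := by
    rw [LieAlgebra.derivedSeries_def, LieAlgebra.derivedSeriesOfIdeal_succ]
  rw [this, ← hII]
  exact LieSubmodule.mono_lie hD1 hD1
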